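/- The unique positive real number m̂ satisfying 2Φ(−m̂) = m̂·φ(m̂) lies in the interval (1.18, 1.20), and 0.2335 < 2Φ(−m̂) < 0.2345 (i.e., 2Φ(−m̂) equals 0.234 to three decimal places). -/

import Mathlib

open MeasureTheory

/-- The standard normal cumulative distribution function
`Φ(x) = ∫_{−∞}^x (2π)^{−1/2} e^{−t²/2} dt`. -/
noncomputable def Phi (x : ℝ) : ℝ :=
  ∫ t in Set.Iic x, (Real.sqrt (2 * Real.pi))⁻¹ * Real.exp (-t ^ 2 / 2)

/-- The standard normal density `φ(x) = (2π)^{−1/2} e^{−x²/2}`. -/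
noncomputable def phi (x : ℝ) : ℝ :=
  (Real.sqrt (2 * Real.pi))⁻¹ * Real.exp (-x ^ 2 / 2)

open Set intervalIntegral Real Filter

lemma c_pos : 0 < Real.sqrt (2 * Real.pi) :=
  Real.sqrt_pos.2 (by positivity)

lemma c_lb : 2.506627 < Real.sqrt (2 * Real.pi) := by
  have h := Real.pi_gt_d6
  rw [show (2.506627 : ℝ) = Real.sqrt (2.506627 ^ 2) by
    rw [Real.sqrt_sq]; norm_num]
  apply Real.sqrt_lt_sqrt (by positivity)
  nlinarith

lemma c_ub : Real.sqrt (2 * Real.pi) < 2.50663 := by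
  have h := Real.pi_lt_d6
  rw [Real.sqrt_lt' (by norm_num)]
  nlinarith

lemma phi_pos (x : ℝ) : 0 < phi x := by
  unfold phi
  positivity

lemma phi_even (x : ℝ) : phi (-x) = phi x := by
  simp [phi, neg_sq]

lemma continuous_phi : Continuous phi := by
  unfold phi; fun_prop

lemma integrable_phi : Integrable phi := by
  have h := (integrable_exp_neg_mul_sq (b := (1/2 : ℝ)) (by norm_num)).const_mul
      (Real.sqrt (2 * Real.pi))⁻¹
  refine h.congr (Filter.Eventually.of_forall fun x => ?_)
  unfold phi; ring_nf

lemma integral_phi : ∫ t, phi t = 1 := by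
  unfold phi
  rw [MeasureTheory.integral_const_mul]
  have : ∀ t : ℝ, Real.exp (-t ^ 2 / 2) = Real.exp (-(1/2) * t ^ 2) := by
    intro t; ring_nf
  simp_rw [this, integral_gaussian]
  rw [show Real.pi / (1/2) = 2 * Real.pi by ring]
  exact inv_mul_cancel₀ (ne_of_gt c_pos)

lemma Phi_eq (x : ℝ) : Phi x = ∫ t in Iic x, phi t := rfl

lemma Phi_zero : Phi 0 = 1 / 2 := by
  have hsym : (∫ t in Iic (0:ℝ), phi t) = ∫ t in Ioi (0:ℝ), phi t := by
    have := integral_comp_neg_Iic (c := (0:ℝ)) (f := phi)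
    simp only [phi_even, neg_zero] at this
    exact this
  have hsplit := integral_Iic_add_Ioi (b := (0:ℝ)) (f := phi)
    integrable_phi.integrableOn integrable_phi.integrableOn
  rw [integral_phi] at hsplit
  rw [Phi_eq]
  linarith

lemma Phi_sub (a b : ℝ) : Phi b - Phi a = ∫ t in a..b, phi t := by
  rw [Phi_eq, Phi_eq]
  exact integral_Iic_sub_Iic integrable_phi.integrableOn integrable_phi.integrableOn

lemma Phi_neg (a : ℝ) :
    Phi (-a) = 1 / 2 - (Real.sqrt (2 * Real.pi))⁻¹ * ∫ t in (0:ℝ)..a, Real.exp (-t ^ 2 / 2) := by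
  have h := Phi_sub (-a) 0
  rw [Phi_zero] at h
  have h2 : (∫ t in (-a)..(0:ℝ), phi t) = ∫ t in (0:ℝ)..a, phi t := by
    have h4 := intervalIntegral.integral_comp_neg (a := (0:ℝ)) (b := a) phi
    simp only [phi_even, neg_zero] at h4
    exact h4.symm
  have h3 : (∫ t in (0:ℝ)..a, phi t)
      = (Real.sqrt (2 * Real.pi))⁻¹ * ∫ t in (0:ℝ)..a, Real.exp (-t ^ 2 / 2) := by
    rw [← intervalIntegral.integral_const_mul]; rfl
  rw [h2, h3] at h
  linarith

lemma hasDerivAt_Phi (x : ℝ) : HasDerivAt Phi (phi x) x := by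
  have hrepr : Phi = fun y => Phi 0 + ∫ t in (0:ℝ)..y, phi t := by
    funext y
    have := Phi_sub 0 y
    linarith
  rw [hrepr]
  have h := intervalIntegral.integral_hasDerivAt_right
    (f := phi) (a := (0:ℝ)) (b := x)
    (continuous_phi.intervalIntegrable _ _)
    (continuous_phi.stronglyMeasurableAtFilter _ _)
    continuous_phi.continuousAt
  exact h.const_add (Phi 0)

lemma hasDerivAt_phi (x : ℝ) : HasDerivAt phi (-x * phi x) x := by
  have h1 : HasDerivAt (fun y : ℝ => -y ^ 2 / 2) (-x) x := by
    have := ((hasDerivAt_pow 2 x).neg).div_const 2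
    refine this.congr_deriv ?_
    ring
  have h2 := (h1.exp).const_mul (Real.sqrt (2 * Real.pi))⁻¹
  refine h2.congr_deriv ?_
  unfold phi; ring

lemma hasDerivAt_g (x : ℝ) :
    HasDerivAt (fun y => 2 * Phi (-y) - y * phi y) ((x ^ 2 - 3) * phi x) x := by
  have h1 : HasDerivAt (fun y : ℝ => Phi (-y)) (-phi x) x := by
    have := (hasDerivAt_Phi (-x)).comp x (hasDerivAt_neg x)
    refine this.congr_deriv ?_
    rw [phi_even]; ring
  have h2 := (hasDerivAt_id x).mul (hasDerivAt_phi x)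
  have h3 := (h1.const_mul 2).sub h2
  refine h3.congr_deriv ?_
  simp only [id_eq]
  ring

lemma g_anti : StrictAntiOn (fun y => 2 * Phi (-y) - y * phi y) (Icc 0 1.7) := by
  apply strictAntiOn_of_deriv_neg (convex_Icc _ _)
  · exact fun x _ => ((hasDerivAt_g x).differentiableAt.continuousAt).continuousWithinAt
  · intro x hx
    rw [interior_Icc] at hx
    rw [(hasDerivAt_g x).deriv]
    have h := phi_pos x
    have h2 : x ^ 2 - 3 < 0 := by nlinarith [hx.1, hx.2]
    exact mul_neg_of_neg_of_pos h2 h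

lemma h_anti : StrictAntiOn (fun y => y * phi y) (Icc 1 2) := by
  apply strictAntiOn_of_deriv_neg (convex_Icc _ _)
  · exact (continuous_id.mul continuous_phi).continuousOn
  · intro x hx
    rw [interior_Icc] at hx
    have hd : HasDerivAt (fun y => y * phi y) ((1 - x ^ 2) * phi x) x := by
      have := (hasDerivAt_id x).mul (hasDerivAt_phi x)
      refine this.congr_deriv ?_
      simp only [id_eq]; ring
    rw [hd.deriv]
    have h := phi_pos x
    have h2 : 1 - x ^ 2 < 0 := by nlinarith [hx.1, hx.2]
    exact mul_neg_of_neg_of_pos h2 h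

lemma tendsto_exp_neg_sq : Tendsto (fun t : ℝ => -Real.exp (-t ^ 2 / 2)) atTop (nhds 0) := by
  rw [show (0:ℝ) = -0 by norm_num]
  apply Tendsto.neg
  apply Real.tendsto_exp_atBot.comp
  have h1 : Tendsto (fun t : ℝ => t ^ 2 / 2) atTop atTop :=
    (tendsto_pow_atTop two_ne_zero).atTop_div_const (by norm_num)
  have h2 : Tendsto (fun t : ℝ => -(t ^ 2 / 2)) atTop atBot := tendsto_neg_atBot_iff.2 h1
  refine h2.congr fun t => by ring

lemma hasDerivAt_negexp (t : ℝ) :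
    HasDerivAt (fun t : ℝ => -Real.exp (-t ^ 2 / 2)) (t * Real.exp (-t ^ 2 / 2)) t := by
  have h1 : HasDerivAt (fun y : ℝ => -y ^ 2 / 2) (-t) t := by
    have := ((hasDerivAt_pow 2 t).neg).div_const 2
    refine this.congr_deriv ?_; ring
  have := (h1.exp).neg
  refine this.congr_deriv ?_; ring

lemma tail_integrable {x : ℝ} (hx : 0 < x) :
    IntegrableOn (fun t : ℝ => t * Real.exp (-t ^ 2 / 2)) (Ioi x) := by
  apply integrableOn_Ioi_deriv_of_nonneg
    ((hasDerivAt_negexp x).continuousAt.continuousWithinAt)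
    (fun t _ => hasDerivAt_negexp t)
    (fun t ht => mul_nonneg (hx.trans ht).le (Real.exp_pos _).le)
    tendsto_exp_neg_sq

lemma tail_value {x : ℝ} (hx : 0 < x) :
    ∫ t in Ioi x, t * Real.exp (-t ^ 2 / 2) = Real.exp (-x ^ 2 / 2) := by
  have := integral_Ioi_of_hasDerivAt_of_nonneg
    ((hasDerivAt_negexp x).continuousAt.continuousWithinAt)
    (fun t _ => hasDerivAt_negexp t)
    (fun t ht => mul_nonneg (hx.trans ht).le (Real.exp_pos _).le)
    tendsto_exp_neg_sq
  rw [this]; ring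

lemma mills {x : ℝ} (hx : 0 < x) : Phi (-x) ≤ phi x / x := by
  have h1 : Phi (-x) = ∫ t in Ioi x, phi t := by
    rw [Phi_eq]
    have := integral_comp_neg_Iic (c := -x) (f := phi)
    simp only [phi_even, neg_neg] at this
    rw [← this]
  have h2 : (∫ t in Ioi x, phi t) ≤ ∫ t in Ioi x, (t / x) * phi t := by
    apply setIntegral_mono_on integrable_phi.integrableOn _ measurableSet_Ioi
    · intro t ht
      have h3 : 1 ≤ t / x := (one_le_div hx).2 (le_of_lt ht)
      nlinarith [phi_pos t]
    · have : (fun t : ℝ => (t / x) * phi t)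
          = fun t : ℝ => ((x * Real.sqrt (2 * Real.pi))⁻¹) * (t * Real.exp (-t ^ 2 / 2)) := by
        funext t; unfold phi; field_simp
      rw [this]
      exact ((tail_integrable hx).const_mul _)
  have h4 : (∫ t in Ioi x, (t / x) * phi t) = phi x / x := by
    have : (fun t : ℝ => (t / x) * phi t)
        = fun t : ℝ => ((x * Real.sqrt (2 * Real.pi))⁻¹) * (t * Real.exp (-t ^ 2 / 2)) := by
      funext t; unfold phi; field_simp
    rw [this, MeasureTheory.integral_const_mul, tail_value hx]
    unfold phi; field_simp
  linarith

-- pointwise exp bound, n = 6, for the integrand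
lemma exp_pt {t : ℝ} (h0 : 0 ≤ t) (h1 : t ≤ 1.2) :
    |Real.exp (-t ^ 2 / 2) - (1 - t ^ 2 / 2 + t ^ 4 / 8 - t ^ 6 / 48 + t ^ 8 / 384
      - t ^ 10 / 3840)| ≤ 7 / 276480 * t ^ 12 := by
  have hx : |(-t ^ 2 / 2 : ℝ)| ≤ 1 := by
    rw [abs_le]; constructor <;> nlinarith
  have h := Real.exp_bound hx (n := 6) (by norm_num)
  have hsum : (∑ m ∈ Finset.range 6, (-t ^ 2 / 2) ^ m / m.factorial)
      = 1 - t ^ 2 / 2 + t ^ 4 / 8 - t ^ 6 / 48 + t ^ 8 / 384 - t ^ 10 / 3840 := by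
    simp [Finset.sum_range_succ, Nat.factorial]
    ring
  have habs : |(-t ^ 2 / 2 : ℝ)| ^ 6 * ((6 : ℕ).succ / ((6:ℕ).factorial * 6))
      = 7 / 276480 * t ^ 12 := by
    rw [abs_of_nonpos (by nlinarith), show (6:ℕ).succ = 7 from rfl,
      show ((6:ℕ).factorial : ℝ) = 720 by norm_num [Nat.factorial]]
    push_cast
    ring
  rw [hsum] at h
  exact le_of_le_of_eq h habs

-- exp bound at a point, n = 7, for the density values
lemma exp_pt7 {u : ℝ} (h0 : 0 ≤ u) (h1 : u ≤ 1) :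
    |Real.exp (-u) - (1 - u + u ^ 2 / 2 - u ^ 3 / 6 + u ^ 4 / 24 - u ^ 5 / 120
      + u ^ 6 / 720)| ≤ 8 / 35280 * u ^ 7 := by
  have hx : |(-u : ℝ)| ≤ 1 := by rw [abs_le]; constructor <;> nlinarith
  have h := Real.exp_bound hx (n := 7) (by norm_num)
  have hsum : (∑ m ∈ Finset.range 7, (-u) ^ m / m.factorial)
      = 1 - u + u ^ 2 / 2 - u ^ 3 / 6 + u ^ 4 / 24 - u ^ 5 / 120 + u ^ 6 / 720 := by
    simp [Finset.sum_range_succ, Nat.factorial]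
    ring
  have habs : |(-u : ℝ)| ^ 7 * ((7 : ℕ).succ / ((7:ℕ).factorial * 7))
      = 8 / 35280 * u ^ 7 := by
    rw [abs_of_nonpos (by nlinarith), show (7:ℕ).succ = 8 from rfl,
      show ((7:ℕ).factorial : ℝ) = 5040 by norm_num [Nat.factorial]]
    push_cast
    ring
  rw [hsum] at h
  exact le_of_le_of_eq h habs

lemma integral_poly (a r : ℝ) :
    ∫ t in (0:ℝ)..a, (1 - t ^ 2 / 2 + t ^ 4 / 8 - t ^ 6 / 48 + t ^ 8 / 384
      - t ^ 10 / 3840 + r * t ^ 12)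
    = a - a ^ 3 / 6 + a ^ 5 / 40 - a ^ 7 / 336 + a ^ 9 / 3456 - a ^ 11 / 42240
      + r * a ^ 13 / 13 := by
  have hF : ∀ t : ℝ, HasDerivAt
      (fun t : ℝ => t - t ^ 3 / 6 + t ^ 5 / 40 - t ^ 7 / 336 + t ^ 9 / 3456
        - t ^ 11 / 42240 + r * t ^ 13 / 13)
      (1 - t ^ 2 / 2 + t ^ 4 / 8 - t ^ 6 / 48 + t ^ 8 / 384 - t ^ 10 / 3840 + r * t ^ 12) t := by
    intro t
    have h := ((((((hasDerivAt_id t).sub ((hasDerivAt_pow 3 t).div_const 6)).add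
      ((hasDerivAt_pow 5 t).div_const 40)).sub ((hasDerivAt_pow 7 t).div_const 336)).add
      ((hasDerivAt_pow 9 t).div_const 3456)).sub ((hasDerivAt_pow 11 t).div_const 42240)).add
      (((hasDerivAt_pow 13 t).const_mul r).div_const 13)
    refine h.congr_deriv ?_
    push_cast
    ring
  rw [intervalIntegral.integral_eq_sub_of_hasDerivAt (fun t _ => hF t)
    ((Continuous.intervalIntegrable (by continuity) _ _))]
  ring

lemma intable_poly (a r : ℝ) : IntervalIntegrable
    (fun t : ℝ => 1 - t ^ 2 / 2 + t ^ 4 / 8 - t ^ 6 / 48 + t ^ 8 / 384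
      - t ^ 10 / 3840 + r * t ^ 12) MeasureTheory.volume 0 a :=
  Continuous.intervalIntegrable (by continuity) _ _

lemma intable_exp (a : ℝ) : IntervalIntegrable
    (fun t : ℝ => Real.exp (-t ^ 2 / 2)) MeasureTheory.volume 0 a :=
  Continuous.intervalIntegrable (by continuity) _ _

lemma J_ub {a : ℝ} (h0 : 0 ≤ a) (h1 : a ≤ 1.2) :
    (∫ t in (0:ℝ)..a, Real.exp (-t ^ 2 / 2))
      ≤ a - a ^ 3 / 6 + a ^ 5 / 40 - a ^ 7 / 336 + a ^ 9 / 3456 - a ^ 11 / 42240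
        + (7 / 276480) * a ^ 13 / 13 := by
  rw [← integral_poly a (7 / 276480)]
  apply intervalIntegral.integral_mono_on h0 (intable_exp a) (intable_poly a _)
  intro t ht
  have := exp_pt ht.1 (ht.2.trans h1)
  have h2 := (abs_le.1 this).2
  linarith

lemma J_lb {a : ℝ} (h0 : 0 ≤ a) (h1 : a ≤ 1.2) :
    a - a ^ 3 / 6 + a ^ 5 / 40 - a ^ 7 / 336 + a ^ 9 / 3456 - a ^ 11 / 42240
      + (-(7 / 276480)) * a ^ 13 / 13
    ≤ ∫ t in (0:ℝ)..a, Real.exp (-t ^ 2 / 2) := by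
  rw [← integral_poly a (-(7 / 276480))]
  apply intervalIntegral.integral_mono_on h0 (intable_poly a _) (intable_exp a)
  intro t ht
  have := exp_pt ht.1 (ht.2.trans h1)
  have h2 := (abs_le.1 this).1
  linarith

lemma E_ub : Real.exp (-(1.183:ℝ) ^ 2 / 2)
    ≤ 1 - (1.183:ℝ)^2/2 + ((1.183:ℝ)^2/2) ^ 2 / 2 - ((1.183:ℝ)^2/2) ^ 3 / 6
      + ((1.183:ℝ)^2/2) ^ 4 / 24 - ((1.183:ℝ)^2/2) ^ 5 / 120 + ((1.183:ℝ)^2/2) ^ 6 / 720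
      + 8 / 35280 * ((1.183:ℝ)^2/2) ^ 7 := by
  have h := exp_pt7 (u := ((1.183:ℝ) ^ 2 / 2)) (by norm_num) (by norm_num)
  rw [show (-((1.183:ℝ) ^ 2 / 2)) = -(1.183:ℝ) ^ 2 / 2 by ring] at h
  have h2 := (abs_le.1 h).2
  linarith

lemma E_lb : 1 - (1.193:ℝ)^2/2 + ((1.193:ℝ)^2/2) ^ 2 / 2 - ((1.193:ℝ)^2/2) ^ 3 / 6
      + ((1.193:ℝ)^2/2) ^ 4 / 24 - ((1.193:ℝ)^2/2) ^ 5 / 120 + ((1.193:ℝ)^2/2) ^ 6 / 720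
      - 8 / 35280 * ((1.193:ℝ)^2/2) ^ 7
    ≤ Real.exp (-(1.193:ℝ) ^ 2 / 2) := by
  have h := exp_pt7 (u := ((1.193:ℝ) ^ 2 / 2)) (by norm_num) (by norm_num)
  rw [show (-((1.193:ℝ) ^ 2 / 2)) = -(1.193:ℝ) ^ 2 / 2 by ring] at h
  have h2 := (abs_le.1 h).1
  linarith

lemma gA : 1.183 * phi 1.183 < 2 * Phi (-1.183) := by
  have hJ := J_ub (a := 1.183) (by norm_num) (by norm_num)
  have hE := E_ub
  have key : 2 * (∫ t in (0:ℝ)..1.183, Real.exp (-t ^ 2 / 2))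
      + 1.183 * Real.exp (-(1.183:ℝ) ^ 2 / 2) < 2.506627 := by
    nlinarith [hJ, hE]
  rw [Phi_neg]
  unfold phi
  have hd : (0:ℝ) < (Real.sqrt (2 * Real.pi))⁻¹ := inv_pos.2 c_pos
  have hdc : Real.sqrt (2 * Real.pi) * (Real.sqrt (2 * Real.pi))⁻¹ = 1 :=
    mul_inv_cancel₀ c_pos.ne'
  nlinarith [mul_pos hd (show (0:ℝ) < Real.sqrt (2 * Real.pi)
      - (2 * (∫ t in (0:ℝ)..1.183, Real.exp (-t ^ 2 / 2))
        + 1.183 * Real.exp (-(1.183:ℝ) ^ 2 / 2)) by linarith [c_lb])]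

lemma gB : 2 * Phi (-1.193) < 1.193 * phi 1.193 := by
  have hJ := J_lb (a := 1.193) (by norm_num) (by norm_num)
  have hE := E_lb
  have key : (2.50663:ℝ) < 2 * (∫ t in (0:ℝ)..1.193, Real.exp (-t ^ 2 / 2))
      + 1.193 * Real.exp (-(1.193:ℝ) ^ 2 / 2) := by
    nlinarith [hJ, hE]
  rw [Phi_neg]
  unfold phi
  have hd : (0:ℝ) < (Real.sqrt (2 * Real.pi))⁻¹ := inv_pos.2 c_pos
  have hdc : Real.sqrt (2 * Real.pi) * (Real.sqrt (2 * Real.pi))⁻¹ = 1 :=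
    mul_inv_cancel₀ c_pos.ne'
  nlinarith [mul_pos hd (show (0:ℝ) < (2 * (∫ t in (0:ℝ)..1.193, Real.exp (-t ^ 2 / 2))
        + 1.193 * Real.exp (-(1.193:ℝ) ^ 2 / 2)) - Real.sqrt (2 * Real.pi)
      by linarith [c_ub])]

lemma bound_hi : 1.183 * phi 1.183 < 0.2345 := by
  have hE := E_ub
  unfold phi
  have hd : (0:ℝ) < (Real.sqrt (2 * Real.pi))⁻¹ := inv_pos.2 c_pos
  have hdc : Real.sqrt (2 * Real.pi) * (Real.sqrt (2 * Real.pi))⁻¹ = 1 :=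
    mul_inv_cancel₀ c_pos.ne'
  have key : 1.183 * Real.exp (-(1.183:ℝ) ^ 2 / 2) < 0.2345 * Real.sqrt (2 * Real.pi) := by
    nlinarith [hE, c_lb]
  nlinarith [mul_pos hd (show (0:ℝ) < 0.2345 * Real.sqrt (2 * Real.pi)
      - 1.183 * Real.exp (-(1.183:ℝ) ^ 2 / 2) by linarith)]

lemma bound_lo : (0.2335:ℝ) < 1.193 * phi 1.193 := by
  have hE := E_lb
  unfold phi
  have hd : (0:ℝ) < (Real.sqrt (2 * Real.pi))⁻¹ := inv_pos.2 c_pos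
  have hdc : Real.sqrt (2 * Real.pi) * (Real.sqrt (2 * Real.pi))⁻¹ = 1 :=
    mul_inv_cancel₀ c_pos.ne'
  have key : 0.2335 * Real.sqrt (2 * Real.pi) < 1.193 * Real.exp (-(1.193:ℝ) ^ 2 / 2) := by
    nlinarith [hE, c_ub]
  nlinarith [mul_pos hd (show (0:ℝ) < 1.193 * Real.exp (-(1.193:ℝ) ^ 2 / 2)
      - 0.2335 * Real.sqrt (2 * Real.pi) by linarith)]

/-- The unique positive real number `m̂` with `2Φ(−m̂) = m̂·φ(m̂)`
lies in `(1.18, 1.20)`, and `0.2335 < 2Φ(−m̂) < 0.2345` (i.e. `2Φ(−m̂) = 0.234` to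
three decimal places). -/
theorem numerical_bounds_mhat (m : ℝ) (hm : 0 < m)
    (hmeq : 2 * Phi (-m) = m * phi m) :
    1.18 < m ∧ m < 1.20 ∧ 0.2335 < 2 * Phi (-m) ∧ 2 * Phi (-m) < 0.2345 := by
  have hm17 : m < 1.7 := by
    by_contra h
    push_neg at h
    have hmil := mills hm
    have h2 : m * phi m ≤ 2 * (phi m / m) := by linarith
    have h3 : m * phi m * m ≤ 2 * (phi m / m) * m := mul_le_mul_of_nonneg_right h2 hm.le
    have h3' : 2 * (phi m / m) * m = 2 * phi m := by field_simp
    rw [h3'] at h3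
    have hm2 : 2.89 ≤ m * m := by nlinarith
    have h4 : 2.89 * phi m ≤ m * m * phi m := mul_le_mul_of_nonneg_right hm2 (phi_pos m).le
    nlinarith [phi_pos m]
  have hmem : m ∈ Icc (0:ℝ) 1.7 := ⟨hm.le, hm17.le⟩
  have hA : (1.183:ℝ) < m := by
    by_contra h
    push_neg at h
    have hle := g_anti.antitoneOn hmem ⟨by norm_num, by norm_num⟩ h
    linarith [gA]
  have hB : m < (1.193:ℝ) := by
    by_contra h
    push_neg at h
    have hle := g_anti.antitoneOn ⟨by norm_num, by norm_num⟩ hmem h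
    linarith [gB]
  have hmem2 : m ∈ Icc (1:ℝ) 2 := ⟨by linarith, by linarith⟩
  have hhi : m * phi m < 1.183 * phi 1.183 := by
    have := h_anti ⟨by norm_num, by norm_num⟩ hmem2 hA
    simpa using this
  have hlo : 1.193 * phi 1.193 < m * phi m := by
    have := h_anti hmem2 ⟨by norm_num, by norm_num⟩ hB
    simpa using this
  refine ⟨by linarith, by linarith, ?_, ?_⟩
  · rw [hmeq]; linarith [bound_lo]
  · rw [hmeq]; linarith [bound_hi]
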